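/- (Corollary 1). Let ℓ = k_0 > k_1 > ⋯ > k_{m−1} ≥ 1 be integers, set k_m = 0, and let d_0, …, d_{m−1} be positive integers. Suppose P_0, P_1, …, P_{m−1} are partitions of {0,1}^ℓ such that P_0 is the trivial partition with the single block {0,1}^ℓ, each P_{j+1} refines P_j (every block of P_{j+1} is contained in a block of P_j), and for each j every block of P_j has cardinality 2^{k_j} with any two distinct elements of a block at Hamming distance at least d_j. Then there exists a kernel g of ℓ dimensions with ∏_{i=0}^{ℓ−1} D_g(i) ≥ ∏_{j=0}^{m−1} d_j^{k_j − k_{j+1}}; equivalently E(g) ≥ (1/ℓ)·Σ_{j=0}^{m−1} (k_j − k_{j+1})·log_ℓ d_j. -/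

import Mathlib

/-- The `i`-th partial distance of a kernel `g` of `ℓ` dimensions:
`D_g(i) = min { d_H(g(w•0•u), g(w•1•v)) : w ∈ {0,1}^i, u, v ∈ {0,1}^{ℓ−1−i} }`,
phrased via pairs of inputs that agree on coordinates `< i` and differ as `0`/`1`
at coordinate `i`. -/
noncomputable def partialDist {ℓ : ℕ} (g : (Fin ℓ → ZMod 2) → (Fin ℓ → ZMod 2)) (i : ℕ) : ℕ :=
  sInf { d | ∃ x y : Fin ℓ → ZMod 2,
    (∀ j : Fin ℓ, (j : ℕ) < i → x j = y j) ∧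
    (∀ j : Fin ℓ, (j : ℕ) = i → x j = 0 ∧ y j = 1) ∧
    d = hammingDist (g x) (g y) }


/-- rank of `e` within `T` under injection `emb` into `ℕ`. -/
noncomputable def rankIn {α : Type*} (emb : α ↪ ℕ) (T : Set α) (e : α) : ℕ :=
  Set.ncard {b | b ∈ T ∧ emb b < emb e}

lemma rankIn_lt {α : Type*} (emb : α ↪ ℕ) {T : Set α} (hT : T.Finite) {e : α} (he : e ∈ T) :
    rankIn emb T e < T.ncard := by
  apply Set.ncard_lt_ncard ?_ hT
  rw [Set.ssubset_iff_of_subset (fun b hb => hb.1)]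
  exact ⟨e, he, fun hc => absurd hc.2 (lt_irrefl _)⟩

lemma rankIn_lt_of_lt {α : Type*} (emb : α ↪ ℕ) {T : Set α} (hT : T.Finite) {e e' : α}
    (he : e ∈ T) (h : emb e < emb e') :
    rankIn emb T e < rankIn emb T e' := by
  have hsub : {b | b ∈ T ∧ emb b < emb e} ⊆ {b | b ∈ T ∧ emb b < emb e'} :=
    fun b hb => ⟨hb.1, hb.2.trans h⟩
  apply Set.ncard_lt_ncard ?_ (hT.subset (fun b hb => hb.1))
  rw [Set.ssubset_iff_of_subset hsub]
  exact ⟨e, ⟨he, h⟩, fun hc => absurd hc.2 (lt_irrefl _)⟩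

lemma rankIn_inj {α : Type*} (emb : α ↪ ℕ) {T : Set α} (hT : T.Finite) {e e' : α}
    (he : e ∈ T) (he' : e' ∈ T) (h : rankIn emb T e = rankIn emb T e') : e = e' := by
  by_contra hne
  rcases lt_trichotomy (emb e) (emb e') with h1 | h1 | h1
  · exact absurd h (Nat.ne_of_lt (rankIn_lt_of_lt emb hT he h1))
  · exact hne (emb.injective h1)
  · exact absurd h.symm (Nat.ne_of_lt (rankIn_lt_of_lt emb hT he' h1))

lemma nat_digit_unique {q a a' r r' : ℕ} (hr : r < q) (hr' : r' < q)
    (h : a * q + r = a' * q + r') : a = a' ∧ r = r' := by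
  have h1 : a = a' := by
    rcases Nat.lt_trichotomy a a' with hlt | he | hlt
    · have h2 : (a + 1) * q ≤ a' * q := Nat.mul_le_mul_right q hlt
      rw [add_mul, one_mul] at h2
      omega
    · exact he
    · have h2 : (a' + 1) * q ≤ a * q := Nat.mul_le_mul_right q hlt
      rw [add_mul, one_mul] at h2
      omega
  subst h1
  omega

lemma bit_eq_of_cast {a b : ℕ}
    (h : ((a % 2 : ℕ) : ZMod 2) = ((b % 2 : ℕ) : ZMod 2)) : a % 2 = b % 2 := by
  have ha : a % 2 < 2 := Nat.mod_lt _ (by norm_num)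
  have hb : b % 2 < 2 := Nat.mod_lt _ (by norm_num)
  have := congrArg ZMod.val h
  rwa [ZMod.val_natCast_of_lt ha, ZMod.val_natCast_of_lt hb] at this

lemma testBit_div_pow (n s q : ℕ) : (n / 2 ^ s).testBit q = n.testBit (s + q) := by
  rw [Nat.testBit_eq_decide_div_mod_eq, Nat.testBit_eq_decide_div_mod_eq, Nat.div_div_eq_div_mul, ← pow_add]

theorem kernel_from_decomposition {ℓ m : ℕ} (hm : 1 ≤ m)
    (k : ℕ → ℕ) (d : ℕ → ℕ)
    (hk0 : k 0 = ℓ)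
    (hkdec : ∀ j, j + 1 < m → k (j + 1) < k j)
    (hklast : 1 ≤ k (m - 1)) (hkm : k m = 0)
    (hd : ∀ j < m, 1 ≤ d j)
    (P : ℕ → Set (Set (Fin ℓ → ZMod 2)))
    (hpart : ∀ j < m, Setoid.IsPartition (P j))
    (hP0 : P 0 = {Set.univ})
    (href : ∀ j, j + 1 < m → ∀ b ∈ P (j + 1), ∃ b' ∈ P j, b ⊆ b')
    (hcard : ∀ j < m, ∀ b ∈ P j, Nat.card b = 2 ^ k j)
    (hdist : ∀ j < m, ∀ b ∈ P j, ∀ c0 ∈ b, ∀ c1 ∈ b,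
      c0 ≠ c1 → d j ≤ hammingDist c0 c1) :
    ∃ g : (Fin ℓ → ZMod 2) → (Fin ℓ → ZMod 2), Function.Bijective g ∧
      ∏ j ∈ Finset.range m, d j ^ (k j - k (j + 1)) ≤
        ∏ i ∈ Finset.range ℓ, partialDist g i := by
  classical
  -- an injection of collections of codewords into ℕ
  obtain ⟨embf, hembf⟩ := (countable_iff_exists_injective (Set (Fin ℓ → ZMod 2))).mp inferInstance
  set emb : Set (Fin ℓ → ZMod 2) ↪ ℕ := ⟨embf, hembf⟩ with hembdef
  -- monotonicity of k
  have kstep : ∀ j, j < m → k (j + 1) ≤ k j := by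
    intro j hj
    rcases Nat.lt_or_ge (j + 1) m with h | h
    · exact (hkdec j h).le
    · have : j + 1 = m := by omega
      rw [this, hkm]; exact Nat.zero_le _
  have kmono : ∀ b, b ≤ m → ∀ a, a ≤ b → k b ≤ k a := by
    intro b
    induction b with
    | zero =>
      intro _ a ha
      have h0 : a = 0 := Nat.le_zero.mp ha
      subst h0; exact le_rfl
    | succ b ih =>
      intro hbm a hab
      rcases Nat.lt_or_ge a (b + 1) with h | h
      · exact le_trans (kstep b (by omega)) (ih (by omega) a (by omega))
      · have : a = b + 1 := by omega
        rw [this]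
  have hkℓ : ∀ j, j ≤ m → k j ≤ ℓ := by
    intro j hj; rw [← hk0]; exact kmono j hj 0 (by omega)
  -- the extended partition family, with singletons at level m
  obtain ⟨Q, hQdef⟩ : ∃ Q : ℕ → Set (Set (Fin ℓ → ZMod 2)),
      Q = fun j => if j = m then Set.range (fun c => ({c} : Set (Fin ℓ → ZMod 2))) else P j :=
    ⟨_, rfl⟩
  have hQlt : ∀ j, j < m → Q j = P j := by
    intro j hj; rw [hQdef]; simp only [Nat.ne_of_lt hj, if_false]
  have hQm : Q m = Set.range (fun c => ({c} : Set (Fin ℓ → ZMod 2))) := by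
    rw [hQdef]; simp only [if_true]
  have hQempty : ∀ j, j ≤ m → ∅ ∉ Q j := by
    intro j hj
    rcases Nat.lt_or_ge j m with h | h
    · rw [hQlt j h]; exact (hpart j h).1
    · have : j = m := by omega
      rw [this, hQm]
      rintro ⟨c, hc⟩
      exact Set.singleton_ne_empty c hc
  have hpart' : ∀ j, j ≤ m → ∀ a : Fin ℓ → ZMod 2, ∃! b, b ∈ Q j ∧ a ∈ b := by
    intro j hj a
    rcases Nat.lt_or_ge j m with h | h
    · rw [hQlt j h]
      exact (hpart j h).2 a
    · have hjm : j = m := by omega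
      subst hjm
      rw [hQm]
      refine ⟨{a}, ⟨⟨a, rfl⟩, Set.mem_singleton a⟩, ?_⟩
      rintro y ⟨⟨c, hc⟩, hay⟩
      simp only at hc
      subst hc
      rw [Set.mem_singleton_iff] at hay
      rw [hay]
  -- choose the block of each level containing a given codeword
  have hex : ∀ j, ∀ c : Fin ℓ → ZMod 2, ∃ b : Set (Fin ℓ → ZMod 2),
      j ≤ m → (b ∈ Q j ∧ c ∈ b) ∧ ∀ b', b' ∈ Q j → c ∈ b' → b' = b := by
    intro j c
    by_cases hj : j ≤ m
    · obtain ⟨b, hb, hu⟩ := hpart' j hj c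
      exact ⟨b, fun _ => ⟨hb, fun b' h1 h2 => hu b' ⟨h1, h2⟩⟩⟩
    · exact ⟨∅, fun h => absurd h hj⟩
  choose B hB using hex
  have hBmem : ∀ j, j ≤ m → ∀ c, B j c ∈ Q j := fun j hj c => ((hB j c) hj).1.1
  have hBself : ∀ j, j ≤ m → ∀ c, c ∈ B j c := fun j hj c => ((hB j c) hj).1.2
  have hBuniq : ∀ j, j ≤ m → ∀ c b', b' ∈ Q j → c ∈ b' → b' = B j c :=
    fun j hj c b' h1 h2 => ((hB j c) hj).2 b' h1 h2
  have hB0 : ∀ c, B 0 c = Set.univ := by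
    intro c
    have := hBmem 0 (by omega) c
    rw [hQlt 0 (by omega), hP0, Set.mem_singleton_iff] at this
    exact this
  have hBm : ∀ c, B m c = {c} := by
    intro c
    have h1 := hBmem m le_rfl c
    rw [hQm] at h1
    obtain ⟨c', hc'⟩ := h1
    have h2 := hBself m le_rfl c
    rw [← hc'] at h2 ⊢
    rw [Set.mem_singleton_iff] at h2
    rw [h2]
  have hBsub : ∀ j, j + 1 ≤ m → ∀ c, B (j + 1) c ⊆ B j c := by
    intro j hj c
    rcases Nat.lt_or_ge (j + 1) m with h | h
    · have h1 := hBmem (j + 1) hj c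
      rw [hQlt (j + 1) h] at h1
      obtain ⟨b', hb'P, hsub⟩ := href j h (B (j + 1) c) h1
      have h2 : b' = B j c := by
        apply hBuniq j (by omega) c b'
        · rw [hQlt j (by omega)]; exact hb'P
        · exact hsub (hBself (j + 1) hj c)
      rw [← h2]
      exact hsub
    · have hjm : j + 1 = m := by omega
      have h1 : B (j + 1) c = {c} := by rw [hjm]; exact hBm c
      rw [h1]
      exact Set.singleton_subset_iff.mpr (hBself j (by omega) c)
  have hBeq_of_mem : ∀ j, j ≤ m → ∀ c c', c' ∈ B j c → B j c' = B j c := by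
    intro j hj c c' h
    exact (hBuniq j hj c' (B j c) (hBmem j hj c) h).symm ▸ rfl
  -- counting sub-blocks
  have hTbound : ∀ j, j < m → ∀ c,
      ({b' | b' ∈ Q (j + 1) ∧ b' ⊆ B j c} : Set (Set (Fin ℓ → ZMod 2))).Finite ∧
      ({b' | b' ∈ Q (j + 1) ∧ b' ⊆ B j c} : Set (Set (Fin ℓ → ZMod 2))).ncard ≤
        2 ^ (k j - k (j + 1)) := by
    intro j hj c
    have hjm : j ≤ m := hj.le
    have hj1m : j + 1 ≤ m := hj
    set s : Finset (Fin ℓ → ZMod 2) := (B j c).toFinite.toFinset with hs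
    set t : Finset (Set (Fin ℓ → ZMod 2)) := s.image (fun x => B (j + 1) x) with ht
    have hts : ∀ b', b' ∈ t ↔ (b' ∈ Q (j + 1) ∧ b' ⊆ B j c) := by
      intro b'
      rw [ht, Finset.mem_image]
      constructor
      · rintro ⟨x, hx, rfl⟩
        rw [hs, Set.Finite.mem_toFinset] at hx
        refine ⟨hBmem (j + 1) hj1m x, ?_⟩
        have h1 : B (j + 1) x ⊆ B j x := hBsub j hj1m x
        have h2 : B j x = B j c := hBeq_of_mem j hjm c x hx
        exact h2 ▸ h1
      · rintro ⟨hbQ, hbsub⟩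
        have hbne : b' ≠ ∅ := fun hcon => hQempty (j + 1) hj1m (hcon ▸ hbQ)
        obtain ⟨x, hx⟩ := Set.nonempty_iff_ne_empty.mpr hbne
        refine ⟨x, ?_, ?_⟩
        · rw [hs, Set.Finite.mem_toFinset]; exact hbsub hx
        · exact (hBuniq (j + 1) hj1m x b' hbQ hx).symm
    have hfib : ∀ b' ∈ t, (s.filter (fun x => B (j + 1) x = b')).card = 2 ^ k (j + 1) := by
      intro b' hb'
      obtain ⟨hbQ, hbsub⟩ := (hts b').mp hb'
      have hset : (s.filter (fun x => B (j + 1) x = b')) = b'.toFinite.toFinset := by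
        ext x
        simp only [Finset.mem_filter, hs, Set.Finite.mem_toFinset]
        constructor
        · rintro ⟨hxB, hfx⟩
          rw [← hfx]
          exact hBself (j + 1) hj1m x
        · intro hx
          exact ⟨hbsub hx, (hBuniq (j + 1) hj1m x b' hbQ hx).symm⟩
      rw [hset]
      have hnc : b'.toFinite.toFinset.card = Nat.card b' := by
        rw [Nat.card_coe_set_eq, Set.ncard_eq_toFinset_card]
      rw [hnc]
      rcases Nat.lt_or_ge (j + 1) m with h | h
      · apply hcard (j + 1) h b'
        rw [← hQlt (j + 1) h]; exact hbQ
      · have hjm1 : j + 1 = m := by omega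
        rw [hjm1] at hbQ ⊢
        rw [hQm] at hbQ
        obtain ⟨x0, hx0⟩ := hbQ
        rw [hkm, pow_zero, ← hx0]
        simp [Nat.card_coe_set_eq]
    have hsum : s.card = ∑ b' ∈ t, (s.filter (fun x => B (j + 1) x = b')).card :=
      Finset.card_eq_sum_card_fiberwise (fun x hx => Finset.mem_image_of_mem _ hx)
    have hconst : ∑ b' ∈ t, (s.filter (fun x => B (j + 1) x = b')).card
        = t.card * 2 ^ k (j + 1) := by
      rw [Finset.sum_congr rfl hfib, Finset.sum_const, smul_eq_mul]
    have hscard : s.card = 2 ^ k j := by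
      rw [hs, ← Set.ncard_eq_toFinset_card, ← Nat.card_coe_set_eq]
      apply hcard j hj
      rw [← hQlt j hj]; exact hBmem j hjm c
    have hpow : (2:ℕ) ^ k j = 2 ^ (k j - k (j + 1)) * 2 ^ k (j + 1) := by
      rw [← pow_add]
      congr 1
      have := kstep j hj
      omega
    have h5 : t.card * 2 ^ k (j + 1) = 2 ^ (k j - k (j + 1)) * 2 ^ k (j + 1) := by
      rw [← hconst, ← hsum, hscard, hpow]
    have htcard : t.card ≤ 2 ^ (k j - k (j + 1)) :=
      Nat.le_of_mul_le_mul_right (le_of_eq h5) (Nat.two_pow_pos (k (j + 1)))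
    have hTt : ({b' | b' ∈ Q (j + 1) ∧ b' ⊆ B j c} : Set (Set (Fin ℓ → ZMod 2))) = ↑t := by
      ext b'
      rw [Set.mem_setOf_eq, Finset.mem_coe, hts b']
    refine ⟨?_, ?_⟩
    · rw [hTt]; exact t.finite_toSet
    · rw [hTt, Set.ncard_coe_finset]; exact htcard
  -- ranks
  obtain ⟨R, hRdef⟩ : ∃ R : ℕ → (Fin ℓ → ZMod 2) → ℕ,
      R = fun j c => rankIn emb {b' | b' ∈ Q (j + 1) ∧ b' ⊆ B j c} (B (j + 1) c) := ⟨_, rfl⟩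
  have hRlt : ∀ j, j < m → ∀ c, R j c < 2 ^ (k j - k (j + 1)) := by
    intro j hj c
    obtain ⟨hfin, hle⟩ := hTbound j hj c
    have hmem : B (j + 1) c ∈ {b' | b' ∈ Q (j + 1) ∧ b' ⊆ B j c} :=
      Set.mem_setOf.mpr ⟨hBmem (j + 1) hj c, hBsub j hj c⟩
    rw [hRdef]
    exact lt_of_lt_of_le (rankIn_lt emb hfin hmem) hle
  have hRinj : ∀ j, j < m → ∀ c c', B j c = B j c' → R j c = R j c' →
      B (j + 1) c = B (j + 1) c' := by
    intro j hj c c' hBjeq hReq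
    rw [hRdef] at hReq
    simp only at hReq
    rw [hBjeq] at hReq
    have hfin : ({b' | b' ∈ Q (j + 1) ∧ b' ⊆ B j c'} : Set (Set (Fin ℓ → ZMod 2))).Finite :=
      (hTbound j hj c').1
    have hm1 : B (j + 1) c ∈ {b' | b' ∈ Q (j + 1) ∧ b' ⊆ B j c'} :=
      Set.mem_setOf.mpr ⟨hBmem (j + 1) hj c, hBjeq ▸ hBsub j hj c⟩
    have hm2 : B (j + 1) c' ∈ {b' | b' ∈ Q (j + 1) ∧ b' ⊆ B j c'} :=
      Set.mem_setOf.mpr ⟨hBmem (j + 1) hj c', hBsub j hj c'⟩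
    exact rankIn_inj emb hfin hm1 hm2 hReq
  -- the address numbers
  obtain ⟨H, hH0, hHs⟩ : ∃ H : ℕ → (Fin ℓ → ZMod 2) → ℕ,
      (∀ c, H 0 c = 0) ∧ ∀ j c, H (j + 1) c = H j c * 2 ^ (k j - k (j + 1)) + R j c :=
    ⟨fun j => Nat.rec (fun _ => 0) (fun j Hj c => Hj c * 2 ^ (k j - k (j + 1)) + R j c) j,
      fun _ => rfl, fun _ _ => rfl⟩
  have hHlt : ∀ j, j ≤ m → ∀ c, H j c < 2 ^ (k 0 - k j) := by
    intro j
    induction j with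
    | zero => intro _ c; rw [hH0 c, Nat.sub_self, pow_zero]; norm_num
    | succ j ih =>
      intro hj c
      rw [hHs]
      have h1 := ih (by omega) c
      have h2 := hRlt j (by omega) c
      have hkk : k (j + 1) ≤ k j := kstep j (by omega)
      have hk0j : k j ≤ k 0 := kmono j (by omega) 0 (by omega)
      have hexp : (k 0 - k j) + (k j - k (j + 1)) = k 0 - k (j + 1) := by omega
      calc H j c * 2 ^ (k j - k (j + 1)) + R j c
          < (H j c + 1) * 2 ^ (k j - k (j + 1)) := by
            rw [add_mul, one_mul]; omega
        _ ≤ 2 ^ (k 0 - k j) * 2 ^ (k j - k (j + 1)) :=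
            Nat.mul_le_mul_right _ (Nat.succ_le_of_lt h1)
        _ = 2 ^ (k 0 - k (j + 1)) := by rw [← pow_add, hexp]
  have hSame : ∀ j, j ≤ m → ∀ c c', H j c = H j c' → B j c = B j c' := by
    intro j
    induction j with
    | zero => intro _ c c' _; rw [hB0 c, hB0 c']
    | succ j ih =>
      intro hj c c' h
      rw [hHs, hHs] at h
      obtain ⟨h1, h2⟩ := nat_digit_unique (hRlt j (by omega) c) (hRlt j (by omega) c') h
      exact hRinj j (by omega) c c' (ih (by omega) c c' h1) h2
  have hTail : ∀ c j, j ≤ m → ∀ t, j ≤ t → t ≤ m →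
      ∃ L, L < 2 ^ (k j - k t) ∧ H t c = H j c * 2 ^ (k j - k t) + L := by
    intro c j hj t
    induction t with
    | zero =>
      intro hjt _
      have hj0 : j = 0 := by omega
      subst hj0
      exact ⟨0, by positivity, by simp⟩
    | succ t ih =>
      intro hjt htm
      rcases Nat.lt_or_ge j (t + 1) with h | h
      · obtain ⟨L, hL, hEq⟩ := ih (by omega) (by omega)
        have hktt : k (t + 1) ≤ k t := kstep t (by omega)
        have hkjt : k t ≤ k j := kmono t (by omega) j (by omega)
        have hexp : (k j - k t) + (k t - k (t + 1)) = k j - k (t + 1) := by omega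
        refine ⟨L * 2 ^ (k t - k (t + 1)) + R t c, ?_, ?_⟩
        · have hR := hRlt t (by omega) c
          calc L * 2 ^ (k t - k (t + 1)) + R t c
              < (L + 1) * 2 ^ (k t - k (t + 1)) := by rw [add_mul, one_mul]; omega
            _ ≤ 2 ^ (k j - k t) * 2 ^ (k t - k (t + 1)) :=
                Nat.mul_le_mul_right _ (Nat.succ_le_of_lt hL)
            _ = 2 ^ (k j - k (t + 1)) := by rw [← pow_add, hexp]
        · rw [hHs, hEq, add_mul, mul_assoc, ← pow_add, hexp]
          ring
      · have hjt1 : j = t + 1 := by omega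
        subst hjt1
        exact ⟨0, by positivity, by simp⟩
  have hHdiv : ∀ j, j ≤ m → ∀ c, H m c / 2 ^ k j = H j c := by
    intro j hj c
    obtain ⟨L, hL, hEq⟩ := hTail c j hj m hj le_rfl
    rw [hkm, Nat.sub_zero] at hL hEq
    rw [hEq, mul_comm, Nat.mul_add_div (Nat.two_pow_pos _),
      Nat.div_eq_of_lt hL, add_zero]
  have hn_lt : ∀ c, H m c < 2 ^ ℓ := by
    intro c
    have := hHlt m le_rfl c
    rwa [hkm, hk0, Nat.sub_zero] at this
  have hninj : ∀ c c', H m c = H m c' → c = c' := by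
    intro c c' h
    have := hSame m le_rfl c c' h
    rw [hBm, hBm] at this
    exact Set.singleton_eq_singleton_iff.mp this
  -- the address map
  obtain ⟨A, hAdef⟩ : ∃ A : (Fin ℓ → ZMod 2) → (Fin ℓ → ZMod 2),
      A = fun c (p : Fin ℓ) => ((H m c / 2 ^ (ℓ - 1 - (p : ℕ)) % 2 : ℕ) : ZMod 2) := ⟨_, rfl⟩
  have hAinj : Function.Injective A := by
    intro c c' h
    refine hninj c c' (Nat.eq_of_testBit_eq fun q => ?_)
    rcases Nat.lt_or_ge q ℓ with hq | hq
    · have hp := congrFun h (⟨ℓ - 1 - q, by omega⟩ : Fin ℓ)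
      rw [hAdef] at hp
      simp only at hp
      have hqq : ℓ - 1 - (ℓ - 1 - q) = q := by omega
      rw [hqq] at hp
      rw [Nat.testBit_eq_decide_div_mod_eq, Nat.testBit_eq_decide_div_mod_eq, bit_eq_of_cast hp]
    · rw [Nat.testBit_lt_two_pow
          (lt_of_lt_of_le (hn_lt c) (Nat.pow_le_pow_right (by norm_num) hq)),
        Nat.testBit_lt_two_pow
          (lt_of_lt_of_le (hn_lt c') (Nat.pow_le_pow_right (by norm_num) hq))]
  have hAbij : Function.Bijective A := Finite.injective_iff_bijective.mp hAinj
  set e : (Fin ℓ → ZMod 2) ≃ (Fin ℓ → ZMod 2) := Equiv.ofBijective A hAbij with hedef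
  have hAe : ∀ x, A (e.symm x) = x := fun x => e.apply_symm_apply x
  refine ⟨⇑e.symm, e.symm.bijective, ?_⟩
  -- partial distance lower bound on each chunk
  have hDbound : ∀ j, j < m → ∀ i, ℓ - k j ≤ i → i < ℓ - k (j + 1) →
      d j ≤ partialDist (⇑e.symm) i := by
    intro j hj i hi1 hi2
    have hkjl : k j ≤ ℓ := hkℓ j hj.le
    have hkj1 : k (j + 1) ≤ k j := kstep j hj
    have hiℓ : i < ℓ := by omega
    apply le_csInf
    · refine ⟨hammingDist (e.symm (fun _ => 0)) (e.symm (fun p => if (p : ℕ) = i then 1 else 0)),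
        (fun _ => 0), (fun p => if (p : ℕ) = i then 1 else 0), ?_, ?_, rfl⟩
      · intro p hp
        show (0 : ZMod 2) = if (p : ℕ) = i then 1 else 0
        rw [if_neg (by omega : ¬ ((p : ℕ) = i))]
      · intro p hp
        refine ⟨rfl, ?_⟩
        show (if (p : ℕ) = i then 1 else 0 : ZMod 2) = 1
        rw [if_pos hp]
    · rintro dd ⟨x, y, hxy, hdiff, rfl⟩
      obtain ⟨hx0, hy1⟩ := hdiff ⟨i, hiℓ⟩ rfl
      have hxne : x ≠ y := by
        intro hcon
        rw [hcon] at hx0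
        rw [hx0] at hy1
        exact absurd hy1 (by decide)
      have hAc : A (e.symm x) = x := hAe x
      have hAc' : A (e.symm y) = y := hAe y
      have hcc' : e.symm x ≠ e.symm y := fun hcon => hxne (e.symm.injective hcon)
      have hbits : ∀ q, k j ≤ q → (H m (e.symm x)).testBit q = (H m (e.symm y)).testBit q := by
        intro q hq
        rcases Nat.lt_or_ge q ℓ with hqℓ | hqℓ
        · have hpi : ℓ - 1 - q < i := by omega
          have hxyp := hxy ⟨ℓ - 1 - q, by omega⟩ hpi
          rw [← hAc, ← hAc'] at hxyp
          rw [hAdef] at hxyp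
          simp only at hxyp
          have hqq : ℓ - 1 - (ℓ - 1 - q) = q := by omega
          rw [hqq] at hxyp
          rw [Nat.testBit_eq_decide_div_mod_eq, Nat.testBit_eq_decide_div_mod_eq, bit_eq_of_cast hxyp]
        · rw [Nat.testBit_lt_two_pow
              (lt_of_lt_of_le (hn_lt _) (Nat.pow_le_pow_right (by norm_num) hqℓ)),
            Nat.testBit_lt_two_pow
              (lt_of_lt_of_le (hn_lt _) (Nat.pow_le_pow_right (by norm_num) hqℓ))]
      have hdivq : H m (e.symm x) / 2 ^ k j = H m (e.symm y) / 2 ^ k j := by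
        apply Nat.eq_of_testBit_eq
        intro q
        rw [testBit_div_pow, testBit_div_pow]
        exact hbits (k j + q) (by omega)
      have hHj : H j (e.symm x) = H j (e.symm y) := by
        rw [← hHdiv j hj.le, ← hHdiv j hj.le, hdivq]
      have hBj := hSame j hj.le _ _ hHj
      apply hdist j hj (B j (e.symm x)) ?_ (e.symm x) (hBself j hj.le _) (e.symm y) ?_ hcc'
      · rw [← hQlt j hj]; exact hBmem j hj.le _
      · rw [hBj]; exact hBself j hj.le _
  -- assemble the product
  have hcover : Finset.range ℓ =
      (Finset.range m).biUnion (fun j => Finset.Ico (ℓ - k j) (ℓ - k (j + 1))) := by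
    ext i
    simp only [Finset.mem_range, Finset.mem_biUnion, Finset.mem_Ico]
    constructor
    · intro hi
      have hexj : ∃ j, k j < ℓ - i := ⟨m, by rw [hkm]; omega⟩
      set j0 := Nat.find hexj with hj0
      have hspec : k j0 < ℓ - i := Nat.find_spec hexj
      have hj0le : j0 ≤ m := Nat.find_min' hexj (by rw [hkm]; omega)
      have hj0pos : j0 ≠ 0 := by
        intro hcon
        rw [hcon, hk0] at hspec
        omega
      have hmin : ¬ (k (j0 - 1) < ℓ - i) := Nat.find_min hexj (by omega)
      refine ⟨j0 - 1, by omega, by omega, ?_⟩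
      have hj1 : j0 - 1 + 1 = j0 := by omega
      rw [hj1]
      omega
    · rintro ⟨j, hjm, h1, h2⟩
      have := hkℓ (j + 1) (by omega)
      omega
  have hdisj : ∀ a ∈ Finset.range m, ∀ b ∈ Finset.range m, a ≠ b →
      Disjoint (Finset.Ico (ℓ - k a) (ℓ - k (a + 1))) (Finset.Ico (ℓ - k b) (ℓ - k (b + 1))) := by
    have key : ∀ a b, a < b → b < m →
        Disjoint (Finset.Ico (ℓ - k a) (ℓ - k (a + 1)))
          (Finset.Ico (ℓ - k b) (ℓ - k (b + 1))) := by
      intro a b hab hbm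
      have h1 : k b ≤ k (a + 1) := kmono b (by omega) (a + 1) (by omega)
      apply Finset.disjoint_left.mpr
      intro x hx hx'
      rw [Finset.mem_Ico] at hx hx'
      omega
    intro a ha b hb hne
    have ha' : a < m := by simpa using ha
    have hb' : b < m := by simpa using hb
    rcases Nat.lt_or_ge a b with h | h
    · exact key a b h hb'
    · exact (key b a (by omega) ha').symm
  rw [hcover, Finset.prod_biUnion hdisj]
  apply Finset.prod_le_prod'
  intro j hj
  rw [Finset.mem_range] at hj
  have hcardIco : (Finset.Ico (ℓ - k j) (ℓ - k (j + 1))).card = k j - k (j + 1) := by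
    rw [Nat.card_Ico]
    have h1 := hkℓ j hj.le
    have h2 := kstep j hj
    omega
  calc d j ^ (k j - k (j + 1))
      = ∏ _i ∈ Finset.Ico (ℓ - k j) (ℓ - k (j + 1)), d j := by
        rw [Finset.prod_const, hcardIco]
    _ ≤ ∏ i ∈ Finset.Ico (ℓ - k j) (ℓ - k (j + 1)), partialDist (⇑e.symm) i := by
        apply Finset.prod_le_prod'
        intro i hi
        rw [Finset.mem_Ico] at hi
        exact hDbound j hj i hi.1 hi.2
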